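/- If int(∩_{i=0}^{r-1} C_i) ≠ ∅, then Fix(V_{C₀,...,C_{r-1}}) = ∩_{i=0}^{r-1} Fix(R_{C_i}) = ∩_{i=0}^{r-1} C_i, where V_{C₀,...,C_{r-1}} = R_{C_{r-1}} ∘ ... ∘ R_{C₀}. -/

import Mathlib

open scoped RealInnerProductSpace

open Metric in
/-- If two points are equidistant from every point of a ball, they're equal. -/
lemma eq_of_equidist_ball {H : Type*} [NormedAddCommGroup H] [InnerProductSpace ℝ H]
    {a b z : H} {ε : ℝ} (hε : 0 < ε)
    (h : ∀ w ∈ Metric.ball z ε, ‖a - w‖ = ‖b - w‖) : a = b := by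
  have key : ∀ w ∈ Metric.ball z ε, ‖a‖ ^ 2 - 2 * ⟪a, w⟫ = ‖b‖ ^ 2 - 2 * ⟪b, w⟫ := by
    intro w hw
    have := h w hw
    have h2 : ‖a - w‖ ^ 2 = ‖b - w‖ ^ 2 := by rw [this]
    rw [norm_sub_sq_real, norm_sub_sq_real] at h2
    linarith
  by_contra hab
  have hba : b - a ≠ 0 := sub_ne_zero.mpr (Ne.symm hab)
  set u : H := ((ε / 2) / ‖b - a‖) • (b - a) with hu
  have hwz : z + u ∈ Metric.ball z ε := by
    rw [Metric.mem_ball, dist_eq_norm]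
    have : z + u - z = u := by abel
    rw [this, hu, norm_smul]
    have h1 : ‖b - a‖ > 0 := norm_pos_iff.mpr hba
    rw [Real.norm_eq_abs, abs_of_pos (by positivity)]
    rw [div_mul_cancel₀ _ (ne_of_gt h1)]
    linarith
  have h1 := key z (Metric.mem_ball_self hε)
  have h2 := key (z + u) hwz
  rw [inner_add_right, inner_add_right] at h2
  have h3 : ⟪a, u⟫ = ⟪b, u⟫ := by linarith
  have h4 : ⟪b - a, u⟫ = 0 := by rw [inner_sub_left]; linarith
  rw [hu, real_inner_smul_right] at h4
  have h5 : ‖b - a‖ > 0 := norm_pos_iff.mpr hba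
  have h6 : ((ε / 2) / ‖b - a‖) > 0 := by positivity
  have h7 : ⟪b - a, b - a⟫ = 0 := by
    rcases mul_eq_zero.mp h4 with h | h
    · linarith
    · exact h
  exact hba (inner_self_eq_zero.mp h7)

lemma foldl_ne {H : Type*} [NormedAddCommGroup H] [InnerProductSpace ℝ H]
    {z : H} {ε : ℝ} (hε : 0 < ε) (T : List (H → H))
    (hprop : ∀ f ∈ T, (∀ a b : H, ‖f a - f b‖ ≤ ‖a - b‖) ∧ ∀ w ∈ Metric.ball z ε, f w = w) :
    ∀ y : H, ∀ w ∈ Metric.ball z ε, ‖T.foldl (fun y f => f y) y - w‖ ≤ ‖y - w‖ := by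
  induction T with
  | nil => simp
  | cons g' T' ih' =>
    intro y w hw
    rw [List.foldl_cons]
    have hg' := hprop g' (by simp)
    calc ‖T'.foldl (fun y f => f y) (g' y) - w‖ ≤ ‖g' y - w‖ :=
          ih' (fun f hf => hprop f (by simp [hf])) (g' y) w hw
      _ = ‖g' y - g' w‖ := by rw [(hg'.2 w hw)]
      _ ≤ ‖y - w‖ := hg'.1 y w

/-- If each function in a list is nonexpansive and fixes every point of a ball, and
the composite (foldl) fixes `x`, then every function in the list fixes `x`. -/
lemma foldl_fixed_list {H : Type*} [NormedAddCommGroup H] [InnerProductSpace ℝ H]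
    {z : H} {ε : ℝ} (hε : 0 < ε) :
    ∀ (L : List (H → H)),
      (∀ f ∈ L, (∀ a b : H, ‖f a - f b‖ ≤ ‖a - b‖) ∧ ∀ w ∈ Metric.ball z ε, f w = w) →
      ∀ x : H, L.foldl (fun y f => f y) x = x → ∀ f ∈ L, f x = x := by
  intro L
  induction L with
  | nil => intro _ x _ f hf; exact absurd hf List.not_mem_nil
  | cons g T ih =>
    intro hprop x hfix
    rw [List.foldl_cons] at hfix
    have tail_ne : ∀ y : H, ∀ w ∈ Metric.ball z ε,
        ‖T.foldl (fun y f => f y) y - w‖ ≤ ‖y - w‖ :=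
      foldl_ne hε T (fun f hf => hprop f (by simp [hf]))
    have hg := hprop g (by simp)
    -- equality of distances
    have heq : ∀ w ∈ Metric.ball z ε, ‖g x - w‖ = ‖x - w‖ := by
      intro w hw
      have h1 : ‖x - w‖ ≤ ‖g x - w‖ := by
        calc ‖x - w‖ = ‖T.foldl (fun y f => f y) (g x) - w‖ := by rw [hfix]
          _ ≤ ‖g x - w‖ := tail_ne (g x) w hw
      have h2 : ‖g x - w‖ ≤ ‖x - w‖ := by
        calc ‖g x - w‖ = ‖g x - g w‖ := by rw [hg.2 w hw]
          _ ≤ ‖x - w‖ := hg.1 x w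
      linarith
    have hgx : g x = x := eq_of_equidist_ball hε heq
    have hfix' : T.foldl (fun y f => f y) x = x := by rw [hgx] at hfix; exact hfix
    intro f hf
    rcases List.mem_cons.mp hf with h | h
    · rw [h]; exact hgx
    · exact ih (fun f hf => hprop f (by simp [hf])) x hfix' f h

theorem fixedPoints_composite_reflections
    {H : Type*} [NormedAddCommGroup H] [InnerProductSpace ℝ H] [CompleteSpace H]
    (r : ℕ) (hr : 2 ≤ r) (C : Fin r → Set H)
    (hne : ∀ i, (C i).Nonempty) (hcl : ∀ i, IsClosed (C i)) (hcv : ∀ i, Convex ℝ (C i))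
    (hint : (interior (⋂ i, C i)).Nonempty)
    (P : Fin r → H → H)
    (hP : ∀ i, ∀ x : H, P i x ∈ C i ∧ ∀ y ∈ C i, ‖x - P i x‖ ≤ ‖x - y‖)
    (V : H → H) (hV : ∀ x : H, V x = Fin.foldl r (fun y i => (2 : ℝ) • P i y - y) x) :
    Function.fixedPoints V = ⋂ i, Function.fixedPoints (fun x => (2 : ℝ) • P i x - x) ∧
      (⋂ i, Function.fixedPoints (fun x => (2 : ℝ) • P i x - x)) = ⋂ i, C i := by
  -- variational inequality for the projection
  have hvar : ∀ i (x : H), ∀ w ∈ C i, ⟪x - P i x, w - P i x⟫ ≤ 0 := by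
    intro i x
    have hPix := (hP i x).1
    have hmin := (hP i x).2
    have hinf : ‖x - P i x‖ = ⨅ w : C i, ‖x - (w : H)‖ := by
      haveI : Nonempty (C i) := ⟨⟨P i x, hPix⟩⟩
      apply le_antisymm
      · exact le_ciInf fun w => hmin w w.2
      · have hbdd : BddBelow (Set.range fun w : C i => ‖x - (w : H)‖) := by
          refine ⟨0, ?_⟩
          rintro _ ⟨w, rfl⟩
          exact norm_nonneg _
        exact ciInf_le hbdd ⟨P i x, hPix⟩
    exact (norm_eq_iInf_iff_real_inner_le_zero (hcv i) hPix).mp hinf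
  -- projection fixed iff membership
  have hPfix : ∀ i (x : H), P i x = x ↔ x ∈ C i := by
    intro i x
    constructor
    · intro h; rw [← h]; exact (hP i x).1
    · intro h
      have := (hP i x).2 x h
      simp only [sub_self, norm_zero] at this
      have : ‖x - P i x‖ = 0 := le_antisymm this (norm_nonneg _)
      have := norm_sub_eq_zero_iff.mp this
      exact this.symm
  -- reflection fixed iff membership
  have hRfix : ∀ i (x : H), (2 : ℝ) • P i x - x = x ↔ x ∈ C i := by
    intro i x
    rw [← hPfix i x]
    constructor
    · intro h
      have : (2 : ℝ) • P i x = (2 : ℝ) • x := by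
        have : (2 : ℝ) • P i x = x + x := by linear_combination (norm := module) h
        rw [this, two_smul]
      exact smul_right_injective H (by norm_num) this
    · intro h; rw [h, two_smul]; abel
  -- reflections are nonexpansive
  have hRne : ∀ i (a b : H),
      ‖((2 : ℝ) • P i a - a) - ((2 : ℝ) • P i b - b)‖ ≤ ‖a - b‖ := by
    intro i a b
    set p := P i a
    set q := P i b
    have h1 : ⟪a - p, q - p⟫ ≤ 0 := hvar i a q (hP i b).1
    have h2 : ⟪b - q, p - q⟫ ≤ 0 := hvar i b p (hP i a).1
    have key : ‖((2 : ℝ) • p - a) - ((2 : ℝ) • q - b)‖ ^ 2 ≤ ‖a - b‖ ^ 2 := by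
      have e1 : ((2 : ℝ) • p - a) - ((2 : ℝ) • q - b) = (2 : ℝ) • (p - q) - (a - b) := by
        module
      rw [e1, norm_sub_sq_real, norm_smul, real_inner_smul_left]
      have hcross : ‖p - q‖ ^ 2 ≤ ⟪p - q, a - b⟫ := by
        have e2 : ⟪p - q, (a - b) - (p - q)⟫ = ⟪p - q, a - b⟫ - ‖p - q‖ ^ 2 := by
          rw [inner_sub_right]
          rw [real_inner_self_eq_norm_sq]
        have esplit : (a - b) - (p - q) = (a - p) - (b - q) := by abel
        have e4 : ⟪p - q, (a - b) - (p - q)⟫ = ⟪p - q, a - p⟫ - ⟪p - q, b - q⟫ := by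
          rw [esplit, inner_sub_right]
        have e5 : ⟪p - q, a - p⟫ = -⟪a - p, q - p⟫ := by
          rw [← neg_sub q p, inner_neg_left, real_inner_comm]
        have e6 : ⟪p - q, b - q⟫ = ⟪b - q, p - q⟫ := real_inner_comm _ _
        linarith [e2, e4, e5, e6, h1, h2]
      have hnn : (0:ℝ) ≤ ‖p - q‖ := norm_nonneg _
      simp only [Real.norm_ofNat]
      nlinarith [hcross]
    nlinarith [key, norm_nonneg (a - b),
      norm_nonneg (((2 : ℝ) • P i a - a) - ((2 : ℝ) • P i b - b))]
  -- second equality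
  have heq2 : (⋂ i, Function.fixedPoints (fun x => (2 : ℝ) • P i x - x)) = ⋂ i, C i := by
    ext x
    simp only [Set.mem_iInter, Function.mem_fixedPoints, Function.IsFixedPt]
    exact forall_congr' fun i => hRfix i x
  refine ⟨?_, heq2⟩
  -- get a ball inside the intersection
  obtain ⟨z, hz⟩ := hint
  obtain ⟨ε, hε, hball⟩ := Metric.isOpen_iff.mp isOpen_interior z hz
  have hball' : Metric.ball z ε ⊆ ⋂ i, C i := hball.trans interior_subset
  -- the list of reflections
  set R : Fin r → H → H := fun i y => (2 : ℝ) • P i y - y with hR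
  ext x
  simp only [Set.mem_iInter, Function.mem_fixedPoints, Function.IsFixedPt]
  constructor
  · intro hfix
    -- rewrite V as a list foldl over the mapped list
    have hfold : ((List.finRange r).map R).foldl (fun y f => f y) x = x := by
      have : Fin.foldl r (fun y i => R i y) x = x := by
        rw [← hV x] at *; exact hfix
      rw [Fin.foldl_eq_foldl_finRange] at this
      rw [List.foldl_map]
      exact this
    have hprop : ∀ f ∈ (List.finRange r).map R,
        (∀ a b : H, ‖f a - f b‖ ≤ ‖a - b‖) ∧ ∀ w ∈ Metric.ball z ε, f w = w := by
      intro f hf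
      obtain ⟨i, _, rfl⟩ := List.mem_map.mp hf
      refine ⟨hRne i, fun w hw => ?_⟩
      exact (hRfix i w).mpr (Set.mem_iInter.mp (hball' hw) i)
    have := foldl_fixed_list hε ((List.finRange r).map R) hprop x hfold
    intro i
    exact this (R i) (List.mem_map.mpr ⟨i, List.mem_finRange i, rfl⟩)
  · intro hall
    rw [hV x, Fin.foldl_eq_foldl_finRange]
    have : ∀ L : List (Fin r), L.foldl (fun y i => (2 : ℝ) • P i y - y) x = x := by
      intro L
      induction L with
      | nil => simp
      | cons i T ih => rw [List.foldl_cons, hall i]; exact ih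
    exact this _
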